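/- For n ≥ 1, let D_ℝ(n) be the subspace of (ℝ × ℝ)^n of tuples ((v_j, r_j))_{0 ≤ j ≤ n−1} with 0 < r_j and |v_j| + r_j ≤ 1 for all j, and such that the open intervals (v_i − r_i, v_i + r_i) and (v_j − r_j, v_j + r_j) are disjoint for all i ≠ j. Let Σ_n = Perm(Fin n) act on D_ℝ(n) by permuting indices: (σ•x)_j = x_{σ⁻¹(j)}. Then: (i) for every x ∈ D_ℝ(n) there is a unique permutation σ(x) ∈ Σ_n such that the reindexed tuple (x_{σ(x)(0)}, …, x_{σ(x)(n−1)}) lies in uD_ℝ(n), i.e. has strictly increasing centers; (ii) the map D_ℝ(n) → uD_ℝ(n) × Σ_n, x ↦ ((x_{σ(x)(j)})_j, σ(x)), is a homeomorphism (Σ_n discrete), and it is Σ_n-equivariant for the action on the target given by ρ·(u, σ) = (u, ρσ). -/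

import Mathlib

open Set

/-- The (finite) symmetric group carries the discrete topology. -/
instance (n : ℕ) : TopologicalSpace (Equiv.Perm (Fin n)) := ⊥

/-- The space `D_ℝ(n)` of `n`-tuples of disjoint open intervals with positive radii
inside `[−1, 1]`. -/
def DR (n : ℕ) : Set (Fin n → ℝ × ℝ) :=
  {x | (∀ j, 0 < (x j).2 ∧ |(x j).1| + (x j).2 ≤ 1) ∧
    ∀ i j, i ≠ j →
      Ioo ((x i).1 - (x i).2) ((x i).1 + (x i).2) ∩
        Ioo ((x j).1 - (x j).2) ((x j).1 + (x j).2) = ∅}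

/-- The ordered part `uD_ℝ(n)`. -/
def uDR (n : ℕ) : Set (Fin n → ℝ × ℝ) :=
  {x | (∀ j, 0 < (x j).2 ∧ |(x j).1| + (x j).2 ≤ 1) ∧
    ∀ j : Fin n, ∀ h : (j : ℕ) + 1 < n,
      (x j).1 + (x j).2 ≤ (x ⟨(j : ℕ) + 1, h⟩).1 - (x ⟨(j : ℕ) + 1, h⟩).2}

variable {n : ℕ}

lemma perm_eq_one_of_strictMono (π : Equiv.Perm (Fin n))
    (h : StrictMono (π : Fin n → Fin n)) : π = 1 := by
  have hw : WellFoundedLT (Fin n) := inferInstance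
  have hsymm : StrictMono (π.symm : Fin n → Fin n) := by
    intro a b hab
    apply h.lt_iff_lt.mp
    simpa using hab
  ext j
  have h1 : j ≤ π j := @StrictMono.le_apply (Fin n) _ hw _ h j
  have h2 : π j ≤ j := by
    have := @StrictMono.le_apply (Fin n) _ hw _ hsymm (π j)
    simpa using this
  simp [le_antisymm h2 h1]

lemma DR.sep {x : Fin n → ℝ × ℝ} (hx : x ∈ DR n) {i j : Fin n}
    (hc : (x i).1 < (x j).1) : (x i).1 + (x i).2 ≤ (x j).1 - (x j).2 := by
  have hij : i ≠ j := fun h => by simp [h] at hc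
  by_contra hlt
  push_neg at hlt
  have hri := (hx.1 i).1
  have hrj := (hx.1 j).1
  set p := max ((x i).1 - (x i).2) ((x j).1 - (x j).2) with hp
  set q := min ((x i).1 + (x i).2) ((x j).1 + (x j).2) with hq
  have hpq : p < q := by
    rw [hp, hq]
    apply max_lt <;> apply lt_min <;> linarith
  have hm : (p + q) / 2 ∈
      Ioo ((x i).1 - (x i).2) ((x i).1 + (x i).2) ∩
        Ioo ((x j).1 - (x j).2) ((x j).1 + (x j).2) := by
    have h1 : (x i).1 - (x i).2 ≤ p := le_max_left _ _
    have h2 : q ≤ (x i).1 + (x i).2 := min_le_left _ _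
    have h3 : (x j).1 - (x j).2 ≤ p := le_max_right _ _
    have h4 : q ≤ (x j).1 + (x j).2 := min_le_right _ _
    exact ⟨⟨by linarith, by linarith⟩, by linarith, by linarith⟩
  rw [hx.2 i j hij] at hm
  exact hm

lemma DR.center_injective {x : Fin n → ℝ × ℝ} (hx : x ∈ DR n) :
    Function.Injective fun j => (x j).1 := by
  intro i j h
  by_contra hij
  simp only at h
  have hri := (hx.1 i).1
  have hrj := (hx.1 j).1
  have hm : (x i).1 ∈
      Ioo ((x i).1 - (x i).2) ((x i).1 + (x i).2) ∩
        Ioo ((x j).1 - (x j).2) ((x j).1 + (x j).2) := by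
    constructor <;> constructor <;> linarith
  rw [hx.2 i j hij] at hm
  exact hm

lemma uDR.sep {u : Fin n → ℝ × ℝ} (hu : u ∈ uDR n) :
    ∀ (j : Fin n) (i : Fin n), (i : ℕ) < (j : ℕ) →
      (u i).1 + (u i).2 ≤ (u j).1 - (u j).2 := by
  suffices H : ∀ (k : ℕ) (hk : k < n) (i : Fin n), (i : ℕ) < k →
      (u i).1 + (u i).2 ≤ (u ⟨k, hk⟩).1 - (u ⟨k, hk⟩).2 by
    intro j i hij
    have := H j j.isLt i hij
    simpa using this
  intro k
  induction k with
  | zero => intro hk i hi; omega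
  | succ k ih =>
    intro hk i hi
    have hkn : k < n := by omega
    have hstep := hu.2 ⟨k, hkn⟩ hk
    rcases Nat.lt_succ_iff_lt_or_eq.mp hi with h | h
    · have := ih hkn i h
      have := (hu.1 ⟨k, hkn⟩).1
      simp only at hstep ⊢
      linarith
    · have : i = ⟨k, hkn⟩ := Fin.ext h
      subst this
      exact hstep

lemma uDR.center_strictMono {u : Fin n → ℝ × ℝ} (hu : u ∈ uDR n) :
    StrictMono fun j => (u j).1 := by
  intro i j hij
  have h1 := uDR.sep hu j i hij
  have h2 := (hu.1 i).1
  have h3 := (hu.1 j).1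
  simp only
  linarith

lemma uDR.mem_DR {u : Fin n → ℝ × ℝ} (hu : u ∈ uDR n) : u ∈ DR n := by
  refine ⟨hu.1, fun i j hij => ?_⟩
  have key : ∀ a b : Fin n, (a : ℕ) < (b : ℕ) →
      Ioo ((u a).1 - (u a).2) ((u a).1 + (u a).2) ∩
        Ioo ((u b).1 - (u b).2) ((u b).1 + (u b).2) = ∅ := by
    intro a b hab
    have := uDR.sep hu b a hab
    ext t
    simp only [mem_inter_iff, mem_Ioo, mem_empty_iff_false, iff_false, not_and]
    intro h1 h2 h3
    linarith
  rcases lt_or_gt_of_ne (fun h => hij (Fin.ext h) : (i : ℕ) ≠ (j : ℕ)) with h | h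
  · exact key i j h
  · rw [inter_comm]; exact key j i h

lemma perm_mem_DR {x : Fin n → ℝ × ℝ} (hx : x ∈ DR n) (π : Equiv.Perm (Fin n)) :
    (fun j => x (π j)) ∈ DR n :=
  ⟨fun j => hx.1 (π j), fun i j hij => hx.2 (π i) (π j) (fun h => hij (π.injective h))⟩

lemma mem_uDR_iff {x : Fin n → ℝ × ℝ} (hx : x ∈ DR n) (σ : Equiv.Perm (Fin n)) :
    (fun j => x (σ j)) ∈ uDR n ↔ StrictMono fun j => (x (σ j)).1 := by
  constructor
  · exact fun h => uDR.center_strictMono h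
  · intro hmono
    refine ⟨fun j => hx.1 (σ j), fun j hj => ?_⟩
    have hlt : (j : Fin n) < ⟨(j : ℕ) + 1, hj⟩ := by
      simp [Fin.lt_def]
    exact DR.sep hx (hmono hlt)

noncomputable def theSort (x : Fin n → ℝ × ℝ) : Equiv.Perm (Fin n) :=
  Tuple.sort fun j => (x j).1

lemma theSort_mem_uDR {x : Fin n → ℝ × ℝ} (hx : x ∈ DR n) :
    (fun j => x (theSort x j)) ∈ uDR n := by
  rw [mem_uDR_iff hx]
  have hmono : Monotone ((fun j => (x j).1) ∘ theSort x) := Tuple.monotone_sort _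
  exact hmono.strictMono_of_injective
    ((DR.center_injective hx).comp (theSort x).injective)

lemma sort_unique {x : Fin n → ℝ × ℝ} (hx : x ∈ DR n) {σ τ : Equiv.Perm (Fin n)}
    (hσ : (fun j => x (σ j)) ∈ uDR n) (hτ : (fun j => x (τ j)) ∈ uDR n) : σ = τ := by
  have hg : StrictMono fun j => (x (σ j)).1 := (mem_uDR_iff hx σ).1 hσ
  have hh : StrictMono fun j => (x (τ j)).1 := (mem_uDR_iff hx τ).1 hτ
  set π : Equiv.Perm (Fin n) := τ.trans σ.symm with hπ
  have hcomp : ∀ j, (x (τ j)).1 = (x (σ (π j))).1 := by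
    intro j; simp [hπ]
  have hπmono : StrictMono (π : Fin n → Fin n) := by
    intro a b hab
    have h5 : (x (τ a)).1 < (x (τ b)).1 := hh hab
    rw [hcomp a, hcomp b] at h5
    exact hg.lt_iff_lt.mp h5
  have hone : π = 1 := perm_eq_one_of_strictMono π hπmono
  apply Equiv.ext
  intro j
  have hπj : π j = j := by rw [hone]; rfl
  have h6 : σ.symm (τ j) = j := hπj
  calc σ j = σ (σ.symm (τ j)) := by rw [h6]
    _ = τ j := by simp

lemma theSort_eq {x : Fin n → ℝ × ℝ} (hx : x ∈ DR n) {σ : Equiv.Perm (Fin n)}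
    (hσ : (fun j => x (σ j)) ∈ uDR n) : theSort x = σ :=
  sort_unique hx (theSort_mem_uDR hx) hσ
instance : DiscreteTopology (Equiv.Perm (Fin n)) := ⟨rfl⟩

lemma cont_center (σ0 : Equiv.Perm (Fin n)) (i : Fin n) :
    Continuous fun x : ↥(DR n) => (x.1 (σ0 i)).1 :=
  continuous_fst.comp ((continuous_apply (σ0 i)).comp continuous_subtype_val)

lemma isOpen_U (σ0 : Equiv.Perm (Fin n)) :
    IsOpen {x : ↥(DR n) | StrictMono fun j => (x.1 (σ0 j)).1} := by
  have hset : {x : ↥(DR n) | StrictMono fun j => (x.1 (σ0 j)).1}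
      = ⋂ (i : Fin n), ⋂ (j : Fin n),
        {x : ↥(DR n) | i < j → (x.1 (σ0 i)).1 < (x.1 (σ0 j)).1} := by
    ext x
    simp only [mem_setOf_eq, mem_iInter, StrictMono]
  rw [hset]
  refine isOpen_iInter_of_finite fun i => isOpen_iInter_of_finite fun j => ?_
  by_cases hij : i < j
  · have : {x : ↥(DR n) | i < j → (x.1 (σ0 i)).1 < (x.1 (σ0 j)).1}
        = {x : ↥(DR n) | (x.1 (σ0 i)).1 < (x.1 (σ0 j)).1} := by
      ext x; simp [hij]
    rw [this]
    exact isOpen_lt (cont_center σ0 i) (cont_center σ0 j)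
  · have : {x : ↥(DR n) | i < j → (x.1 (σ0 i)).1 < (x.1 (σ0 j)).1} = univ := by
      ext x; simp [hij]
    rw [this]
    exact isOpen_univ

lemma theSort_eventually_const (x0 : ↥(DR n)) :
    ∀ᶠ x : ↥(DR n) in nhds x0, theSort x.1 = theSort x0.1 := by
  set σ0 := theSort x0.1 with hσ0
  have hx0 : x0 ∈ {x : ↥(DR n) | StrictMono fun j => (x.1 (σ0 j)).1} :=
    (mem_uDR_iff x0.2 σ0).1 (theSort_mem_uDR x0.2)
  filter_upwards [(isOpen_U σ0).mem_nhds hx0] with x hx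
  exact theSort_eq x.2 ((mem_uDR_iff x.2 σ0).2 hx)

lemma continuous_theSort : Continuous fun x : ↥(DR n) => theSort x.1 := by
  rw [continuous_iff_continuousAt]
  intro x0
  have h : (fun x : ↥(DR n) => theSort x.1) =ᶠ[nhds x0] fun _ => theSort x0.1 :=
    theSort_eventually_const x0
  exact continuousAt_const.congr h.symm

lemma continuous_sorted :
    Continuous fun x : ↥(DR n) => (fun j => x.1 (theSort x.1 j) : Fin n → ℝ × ℝ) := by
  rw [continuous_iff_continuousAt]
  intro x0
  set σ0 := theSort x0.1 with hσ0
  have hcont : ContinuousAt (fun x : ↥(DR n) => (fun j => x.1 (σ0 j) : Fin n → ℝ × ℝ)) x0 :=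
    (continuous_pi fun j => (continuous_apply (σ0 j)).comp continuous_subtype_val).continuousAt
  apply hcont.congr
  filter_upwards [theSort_eventually_const x0] with x hx
  rw [hx]

lemma continuous_invF :
    Continuous fun p : ↥(uDR n) × Equiv.Perm (Fin n) =>
      (fun j => p.1.1 (p.2⁻¹ j) : Fin n → ℝ × ℝ) := by
  rw [continuous_iff_continuousAt]
  intro p0
  have hV : (univ ×ˢ {p0.2} : Set (↥(uDR n) × Equiv.Perm (Fin n))) ∈ nhds p0 :=
    (isOpen_univ.prod (isOpen_discrete {p0.2})).mem_nhds (by simp)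
  have hcont : ContinuousAt
      (fun p : ↥(uDR n) × Equiv.Perm (Fin n) => (fun j => p.1.1 (p0.2⁻¹ j) : Fin n → ℝ × ℝ)) p0 :=
    (continuous_pi fun j =>
      (continuous_apply (p0.2⁻¹ j)).comp (continuous_subtype_val.comp continuous_fst)).continuousAt
  apply hcont.congr
  filter_upwards [hV] with p hp
  have : p.2 = p0.2 := by simpa using hp.2
  rw [this]

/-- (i) Every `x ∈ D_ℝ(n)` admits a unique permutation `σ(x)` such
that the reindexed tuple `(x_{σ(x)(0)}, …, x_{σ(x)(n−1)})` lies in `uD_ℝ(n)`; (ii) the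
map `x ↦ ((x_{σ(x)(j)})_j, σ(x))` is a homeomorphism `D_ℝ(n) ≅ uD_ℝ(n) × Σ_n`, and it is
`Σ_n`-equivariant for the action `(σ • x)_j = x_{σ⁻¹(j)}` on the source and
`ρ · (u, σ) = (u, ρσ)` on the target. -/
theorem stmt_16 (n : ℕ) (hn : 1 ≤ n) :
    (∀ x ∈ DR n, ∃! σ : Equiv.Perm (Fin n), (fun j => x (σ j)) ∈ uDR n) ∧
    ∃ e : ↥(DR n) ≃ₜ (↥(uDR n) × Equiv.Perm (Fin n)),
      (∀ x : ↥(DR n), ((e x).1 : Fin n → ℝ × ℝ) = fun j => x.val ((e x).2 j)) ∧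
      (∀ ρ : Equiv.Perm (Fin n),
        Set.MapsTo (fun x : Fin n → ℝ × ℝ => fun j => x (ρ⁻¹ j)) (DR n) (DR n)) ∧
      (∀ (ρ : Equiv.Perm (Fin n)) (x : ↥(DR n))
        (hx : (fun j => x.val (ρ⁻¹ j)) ∈ DR n),
        e ⟨fun j => x.val (ρ⁻¹ j), hx⟩ = ((e x).1, ρ * (e x).2)) := by
  constructor
  · intro x hx
    exact ⟨theSort x, theSort_mem_uDR hx,
      fun σ hσ => sort_unique hx hσ (theSort_mem_uDR hx)⟩
  · set e : ↥(DR n) ≃ₜ (↥(uDR n) × Equiv.Perm (Fin n)) :=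
      { toFun := fun x => (⟨fun j => x.1 (theSort x.1 j), theSort_mem_uDR x.2⟩, theSort x.1)
        invFun := fun p => ⟨fun j => p.1.1 (p.2⁻¹ j),
          perm_mem_DR (uDR.mem_DR p.1.2) p.2⁻¹⟩
        left_inv := by
          intro x
          ext j
          · simp
          · simp
        right_inv := by
          intro p
          have hmem : (fun j => (fun j => p.1.1 (p.2⁻¹ j)) (p.2 j)) ∈ uDR n := by
            have : (fun j => (fun j => p.1.1 (p.2⁻¹ j)) (p.2 j)) = p.1.1 := by
              funext j; simp
            rw [this]; exact p.1.2
          have hsort : theSort (fun j => p.1.1 (p.2⁻¹ j)) = p.2 :=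
            theSort_eq (perm_mem_DR (uDR.mem_DR p.1.2) p.2⁻¹) hmem
          refine Prod.ext ?_ ?_
          · apply Subtype.ext
            funext j
            simp only [Equiv.Perm.inv_def] at hsort
            simp [hsort]
          · exact hsort
        continuous_toFun := (continuous_sorted.subtype_mk _).prodMk continuous_theSort
        continuous_invFun := continuous_invF.subtype_mk _ } with he
    refine ⟨e, fun x => rfl, fun ρ x hx => perm_mem_DR hx ρ⁻¹, ?_⟩
    intro ρ x hx
    set σ := theSort x.1 with hσ
    have hmem : (fun j => (fun j => x.1 (ρ⁻¹ j)) ((ρ * σ) j)) ∈ uDR n := by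
      have : (fun j => (fun j => x.1 (ρ⁻¹ j)) ((ρ * σ) j)) = fun j => x.1 (σ j) := by
        funext j; simp [Equiv.Perm.mul_apply]
      rw [this]
      exact theSort_mem_uDR x.2
    have hsort : theSort (fun j => x.1 (ρ⁻¹ j)) = ρ * σ := theSort_eq hx hmem
    refine Prod.ext ?_ ?_
    · apply Subtype.ext
      funext j
      show (fun k => x.1 (ρ⁻¹ k)) (theSort (fun k => x.1 (ρ⁻¹ k)) j) = x.1 (σ j)
      rw [hsort]
      simp [Equiv.Perm.mul_apply]
    · exact hsort
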